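/- Let K ⊂ ℂ be compact with all roots of the degree-n polynomial p contained in K, and suppose the sup norm ‖p‖_K is attained at ζ ∈ K. If there is a closed disk D_R of radius R with ζ ∈ ∂D_R and K ⊆ D_R, then ‖p'‖_K ≥ |p'(ζ)| ≥ (n/(2R)) ‖p‖_K. In particular, to prove Turán-type inequalities it suffices to verify the disk condition at a single norm-attaining boundary point. -/

import Mathlib

open Polynomial Metric

/-- Key geometric fact: if `|ζ - c| = R`, `|r - c| ≤ R`, `r ≠ ζ`, then
`Re((ζ - c) / (ζ - r)) ≥ 1/2`. -/
lemma half_le_re_aux (ζ c r : ℂ) (R : ℝ) (hR : 0 < R)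
    (hζc : ‖ζ - c‖ = R) (hrc : ‖r - c‖ ≤ R) (hne : ζ ≠ r) :
    (1 : ℝ) / 2 ≤ ((ζ - c) * (ζ - r)⁻¹).re := by
  set u := ζ - c
  set w := ζ - r
  have hw : w ≠ 0 := sub_ne_zero.mpr hne
  have hwpos : 0 < Complex.normSq w := Complex.normSq_pos.mpr hw
  have h1 : Complex.normSq (u - w) ≤ Complex.normSq u := by
    have : r - c = u - w := by ring
    have h2 : ‖u - w‖ ≤ ‖u‖ := by
      rw [← this, hζc]; exact hrc
    have h3 := mul_self_le_mul_self (norm_nonneg _) h2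
    rw [Complex.normSq_eq_norm_sq, Complex.normSq_eq_norm_sq, sq, sq]
    exact h3
  have hns : Complex.normSq w ≤ 2 * (u.re * w.re + u.im * w.im) := by
    simp only [Complex.normSq_apply, Complex.sub_re, Complex.sub_im] at h1 ⊢
    nlinarith
  have hre : ((u * w⁻¹)).re = (u.re * w.re + u.im * w.im) / Complex.normSq w := by
    rw [← div_eq_mul_inv, Complex.div_re]
    ring
  rw [hre, le_div_iff₀ hwpos]
  nlinarith

/-- If the sup norm of `p` on `K` is attained at `ζ`, and `ζ` lies on the
boundary circle of a closed disk of radius `R` containing `K`, then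
`sup_K |p'| ≥ |p'(ζ)| ≥ (n/(2R)) sup_K |p|`. -/
theorem turan_at_norm_attaining_point (K : Set ℂ) (hK : IsCompact K)
    (n : ℕ) (hn : 1 ≤ n) (p : Polynomial ℂ) (hdeg : p.natDegree = n)
    (hroots : ∀ w : ℂ, p.IsRoot w → w ∈ K)
    (ζ : ℂ) (hζ : ζ ∈ K)
    (hmax : ∀ z ∈ K, ‖p.eval z‖ ≤ ‖p.eval ζ‖)
    (c : ℂ) (R : ℝ) (hR : 0 < R) (hζc : dist ζ c = R) (hKD : K ⊆ closedBall c R) :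
    ((n : ℝ) / (2 * R)) * sSup ((fun z => ‖p.eval z‖) '' K)
        ≤ ‖(Polynomial.derivative p).eval ζ‖ ∧
      ‖(Polynomial.derivative p).eval ζ‖
        ≤ sSup ((fun z => ‖(Polynomial.derivative p).eval z‖) '' K) := by
  classical
  constructor
  · -- first inequality
    have hsup : sSup ((fun z => ‖p.eval z‖) '' K) = ‖p.eval ζ‖ := by
      apply IsGreatest.csSup_eq
      exact ⟨⟨ζ, hζ, rfl⟩, by rintro _ ⟨z, hz, rfl⟩; exact hmax z hz⟩
    rw [hsup]
    by_cases hpζ : p.eval ζ = 0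
    · simp [hpζ]
    have hp0 : p ≠ 0 := by
      intro h; rw [h] at hdeg; simp at hdeg; omega
    set T := p.roots with hT
    have hcard : Multiset.card T = n := by
      rw [hT, (Polynomial.splits_iff_card_roots).mp (IsAlgClosed.splits p), hdeg]
    have hfact : p = C p.leadingCoeff * (T.map fun r => X - C r).prod :=
      (IsAlgClosed.splits p).eq_prod_roots
    set a := p.leadingCoeff
    -- evaluate p and p'
    have hevp : p.eval ζ = a * (T.map fun r => ζ - r).prod := by
      conv_lhs => rw [hfact]
      rw [eval_mul, eval_C]
      congr 1
      rw [eval_multiset_prod, Multiset.map_map]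
      congr 1
      ext r
      simp
    have hevd : (derivative p).eval ζ
        = a * (T.map fun r => (((T.erase r).map fun s => ζ - s).prod)).sum := by
      conv_lhs => rw [hfact]
      rw [derivative_mul, derivative_C, zero_mul, zero_add, eval_mul, eval_C]
      congr 1
      rw [derivative_prod]
      show (Polynomial.evalRingHom ζ) _ = _
      rw [map_multiset_sum, Multiset.map_map]
      congr 1
      apply Multiset.map_congr rfl
      intro r hr
      simp only [Function.comp_apply, derivative_sub, derivative_X, derivative_C, sub_zero,
        mul_one, eval_mul, eval_one]
      rw [map_multiset_prod, Multiset.map_map]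
      congr 1
      ext s
      simp
    -- roots are distinct from ζ
    have hzr : ∀ r ∈ T, ζ - r ≠ 0 := by
      intro r hr h0
      apply hpζ
      have : r = ζ := by linear_combination -h0
      rw [← this]
      exact (Polynomial.isRoot_of_mem_roots hr)
    -- the key identity  p(ζ) * S = p'(ζ)
    set S := (T.map fun r => (ζ - r)⁻¹).sum with hS
    have hkey : p.eval ζ * S = (derivative p).eval ζ := by
      rw [hevp, hevd, hS, mul_assoc]
      congr 1
      rw [← Multiset.sum_map_mul_left]
      congr 1
      apply Multiset.map_congr rfl
      intro r hr
      have h := Multiset.prod_map_erase (f := fun s => ζ - s) (m := T) hr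
      rw [← h, mul_right_comm, mul_inv_cancel₀ (hzr r hr), one_mul]
    -- lower bound on the real part
    have hterm : ∀ r ∈ T, (1 : ℝ) / 2 ≤ ((ζ - c) * (ζ - r)⁻¹).re := by
      intro r hr
      have hrK : r ∈ K := hroots r (Polynomial.isRoot_of_mem_roots hr)
      have hrc : ‖r - c‖ ≤ R := by
        have := hKD hrK
        rwa [mem_closedBall, Complex.dist_eq] at this
      have hne : ζ ≠ r := by
        intro h; exact hzr r hr (by rw [h, sub_self])
      exact half_le_re_aux ζ c r R hR (by rwa [Complex.dist_eq] at hζc) hrc hne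
    have hresum : ((ζ - c) * S).re
        = ((T.map fun r => ((ζ - c) * (ζ - r)⁻¹).re)).sum := by
      rw [hS, ← Multiset.sum_map_mul_left]
      rw [← Complex.coe_reAddGroupHom, map_multiset_sum, Multiset.map_map]
      rfl
    have hlow : (n : ℝ) / 2 ≤ ((ζ - c) * S).re := by
      rw [hresum]
      have := Multiset.card_nsmul_le_sum (s := T.map fun r => ((ζ - c) * (ζ - r)⁻¹).re)
        (a := (1 : ℝ) / 2) (by
          intro x hx
          obtain ⟨r, hr, rfl⟩ := Multiset.mem_map.mp hx
          exact hterm r hr)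
      rw [Multiset.card_map, hcard] at this
      calc (n : ℝ) / 2 = n • ((1:ℝ)/2) := by rw [nsmul_eq_mul]; ring
        _ ≤ _ := this
    have habs : ((ζ - c) * S).re ≤ R * ‖S‖ := by
      calc ((ζ - c) * S).re ≤ ‖(ζ - c) * S‖ := Complex.re_le_norm _
        _ = R * ‖S‖ := by
            rw [norm_mul, show ‖ζ - c‖ = R by rwa [Complex.dist_eq] at hζc]
    have hSlow : (n : ℝ) / (2 * R) ≤ ‖S‖ := by
      have h := hlow.trans habs
      rw [div_le_iff₀ (by positivity : (0:ℝ) < 2 * R)]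
      nlinarith
    calc (n : ℝ) / (2 * R) * ‖p.eval ζ‖
        ≤ ‖S‖ * ‖p.eval ζ‖ := by
          apply mul_le_mul_of_nonneg_right hSlow (norm_nonneg _)
      _ = ‖(derivative p).eval ζ‖ := by
          rw [← hkey, norm_mul]; ring
  · -- second inequality
    apply le_csSup
    · apply IsCompact.bddAbove_image hK
      apply Continuous.continuousOn
      exact continuous_norm.comp (Polynomial.continuous _)
    · exact ⟨ζ, hζ, rfl⟩
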